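/- arXiv:0708.4006 — 8 statements merged into one kernel-verified Lean document; each statement's English description precedes it below -/
import Mathlib

section
/- Let k be a field, G a finite group, and β a normalized 3-cocycle on G with values in kˣ. Then for all g, x, y, z ∈ G the elements θ_g defined from β satisfy θ_g(x,y)·θ_g(xy,z) = θ_{x⁻¹gx}(y,z)·θ_g(x,yz). -/
open scoped BigOperators TensorProduct

namespace StringyOrbifold

/-- A normalized 3-cocycle on `G` with values in `kˣ`. -/
def IsNormalized3Cocycle {k G : Type*} [Field k] [Group G] (β : G → G → G → kˣ) : Prop :=
  (∀ g h l m : G, β g h l * β g (h * l) m * β h l m = β (g * h) l m * β g h (l * m)) ∧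
  (∀ g h : G, β 1 g h = 1 ∧ β g 1 h = 1 ∧ β g h 1 = 1)

/-- A normalized 2-cocycle on `G` with values in `kˣ`. -/
def IsNormalized2Cocycle {k G : Type*} [Field k] [Group G] (α : G → G → kˣ) : Prop :=
  (∀ g h l : G, α g h * α (g * h) l = α h l * α g (h * l)) ∧
  (∀ g : G, α g 1 = 1 ∧ α 1 g = 1)

/-- `θ_g(x,y) = β(g,x,y)·β(x,y,(xy)⁻¹g(xy)) / β(x,x⁻¹gx,y)`. -/
def ddTheta {k G : Type*} [Field k] [Group G] (β : G → G → G → kˣ) (g x y : G) : kˣ :=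
  β g x y * β x y ((x * y)⁻¹ * g * (x * y)) / β x (x⁻¹ * g * x) y

/-- `γ_x(g₁,g₂) = β(g₁,g₂,x)·β(x,x⁻¹g₁x,x⁻¹g₂x) / β(g₁,x,x⁻¹g₂x)`. -/
def ddGamma {k G : Type*} [Field k] [Group G] (β : G → G → G → kˣ) (x g1 g2 : G) : kˣ :=
  β g1 g2 x * β x (x⁻¹ * g1 * x) (x⁻¹ * g2 * x) / β g1 x (x⁻¹ * g2 * x)

/-- The trivial 3-cocycle. -/
def trivCocycle (k G : Type*) [Field k] [Group G] : G → G → G → kˣ := fun _ _ _ => 1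

/-- The underlying `k`-vector space of the twisted Drinfel'd double `D^β(k[G])`:
the free `k`-module on the basis `⟨g,x⟩`, `(g,x) ∈ G × G`, realized as functions. -/
abbrev DD (k G : Type*) := G × G → k

/-- The function model for `D^β(k[G]) ⊗ D^β(k[G])`. -/
abbrev DD2 (k G : Type*) := (G × G) × (G × G) → k

/-- The function model for the threefold tensor power of `D^β(k[G])`. -/
abbrev DD3 (k G : Type*) := (G × G) × (G × G) × (G × G) → k

/-- The basis element `⟨g,x⟩` of `D^β(k[G])`. -/
def ddBasis {k G : Type*} [Field k] [DecidableEq G] (g x : G) : DD k G :=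
  fun p => if p = (g, x) then 1 else 0

/-- The multiplication of `D^β(k[G])`, the bilinear extension of
`⟨g,x⟩·⟨h,y⟩ = δ_{g,xhx⁻¹} θ_g(x,y) ⟨g,xy⟩`. -/
def ddMul {k G : Type*} [Field k] [Group G] [Fintype G]
    (β : G → G → G → kˣ) (a b : DD k G) : DD k G :=
  fun p => ∑ x : G, a (p.1, x) * b (x⁻¹ * p.1 * x, x⁻¹ * p.2) * (ddTheta β p.1 x (x⁻¹ * p.2) : k)

/-- The identity `Σ_{h∈G} ⟨h,e⟩` of `D^β(k[G])`. -/
def ddOne (k G : Type*) [Field k] [Group G] [Fintype G] [DecidableEq G] : DD k G :=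
  ∑ g : G, ddBasis g 1

/-- The elementary tensor `a ⊗ b` in the function model of `D^β(k[G]) ⊗ D^β(k[G])`. -/
def ddTensor {k G : Type*} [Field k] (a b : DD k G) : DD2 k G :=
  fun p => a p.1 * b p.2

/-- The elementary tensor `a ⊗ b ⊗ c` in the function model of the triple tensor power. -/
def ddTensor3 {k G : Type*} [Field k] (a b c : DD k G) : DD3 k G :=
  fun p => a p.1 * b p.2.1 * c p.2.2

/-- Componentwise multiplication on `D^β(k[G]) ⊗ D^{β'}(k[G])` in the function model. -/
def dd2Mul {k G : Type*} [Field k] [Group G] [Fintype G]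
    (β β' : G → G → G → kˣ) (a b : DD2 k G) : DD2 k G :=
  fun p => ∑ x : G, ∑ y : G,
    a ((p.1.1, x), (p.2.1, y)) *
      b ((x⁻¹ * p.1.1 * x, x⁻¹ * p.1.2), (y⁻¹ * p.2.1 * y, y⁻¹ * p.2.2)) *
      (ddTheta β p.1.1 x (x⁻¹ * p.1.2) : k) * (ddTheta β' p.2.1 y (y⁻¹ * p.2.2) : k)

/-- Componentwise multiplication on the threefold tensor power of `D^β(k[G])`. -/
def dd3Mul {k G : Type*} [Field k] [Group G] [Fintype G]
    (β : G → G → G → kˣ) (a b : DD3 k G) : DD3 k G :=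
  fun p => ∑ x : G, ∑ y : G, ∑ z : G,
    a ((p.1.1, x), (p.2.1.1, y), (p.2.2.1, z)) *
      b ((x⁻¹ * p.1.1 * x, x⁻¹ * p.1.2), (y⁻¹ * p.2.1.1 * y, y⁻¹ * p.2.1.2),
        (z⁻¹ * p.2.2.1 * z, z⁻¹ * p.2.2.2)) *
      (ddTheta β p.1.1 x (x⁻¹ * p.1.2) : k) * (ddTheta β p.2.1.1 y (y⁻¹ * p.2.1.2) : k) *
      (ddTheta β p.2.2.1 z (z⁻¹ * p.2.2.2) : k)

/-- The comultiplication of `D^β(k[G])`: the linear extension of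
`Δ(⟨g,x⟩) = Σ_{g₁g₂=g} γ_x(g₁,g₂) ⟨g₁,x⟩ ⊗ ⟨g₂,x⟩`. -/
def ddComul {k G : Type*} [Field k] [Group G] [DecidableEq G]
    (β : G → G → G → kˣ) (a : DD k G) : DD2 k G :=
  fun p =>
    if p.1.2 = p.2.2 then (ddGamma β p.1.2 p.1.1 p.2.1 : k) * a (p.1.1 * p.2.1, p.1.2) else 0

/-- The map `id ⊗ Δ` from `D^β(k[G])^{⊗2}` to `D^β(k[G])^{⊗3}` in the function model. -/
def idTensorComul {k G : Type*} [Field k] [Group G] [DecidableEq G]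
    (β : G → G → G → kˣ) (u : DD2 k G) : DD3 k G :=
  fun p => if p.2.1.2 = p.2.2.2 then
      (ddGamma β p.2.1.2 p.2.1.1 p.2.2.1 : k) * u (p.1, (p.2.1.1 * p.2.2.1, p.2.1.2))
    else 0

/-- The map `Δ ⊗ id` from `D^β(k[G])^{⊗2}` to `D^β(k[G])^{⊗3}` in the function model. -/
def comulTensorId {k G : Type*} [Field k] [Group G] [DecidableEq G]
    (β : G → G → G → kˣ) (u : DD2 k G) : DD3 k G :=
  fun p => if p.1.2 = p.2.1.2 then
      (ddGamma β p.1.2 p.1.1 p.2.1.1 : k) * u ((p.1.1 * p.2.1.1, p.1.2), p.2.2)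
    else 0

/-- The flip of the two tensor factors. -/
def ddSwap {k G : Type*} (u : DD2 k G) : DD2 k G := fun p => u (p.2, p.1)

/-- The counit `ε(⟨g,x⟩) = δ_{g,e}` of `D^β(k[G])`. -/
def ddCounit {k G : Type*} [Field k] [Group G] [Fintype G] (a : DD k G) : k :=
  ∑ x : G, a (1, x)

/-- The injection `k[G]^* → D^β(k[G])`, `δ_g ↦ ⟨g,e⟩`. -/
def ddIota {k G : Type*} [Field k] [Group G] [DecidableEq G] (f : G → k) : DD k G :=
  fun p => if p.2 = 1 then f p.1 else 0

/-- The diagonal map `D^{ββ'}(k[G]) → D^β(k[G]) ⊗ D^{β'}(k[G])`, `⟨g,x⟩ ↦ ⟨g,x⟩ ⊗ ⟨g,x⟩`. -/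
def ddDiag {k G : Type*} [Field k] [DecidableEq G] (a : DD k G) : DD2 k G :=
  fun p => if p.1 = p.2 then a p.1 else 0

/-- The antipode of `D^β(k[G])`: the linear extension of
`S(⟨g,x⟩) = (θ_{g⁻¹}(x,x⁻¹)·γ_x(g,g⁻¹))⁻¹ ⟨x⁻¹g⁻¹x, x⁻¹⟩`. -/
def ddAntipode {k G : Type*} [Field k] [Group G] (β : G → G → G → kˣ) (a : DD k G) : DD k G :=
  fun p =>
    (((ddTheta β (p.2⁻¹ * p.1 * p.2) p.2⁻¹ p.2 *
        ddGamma β p.2⁻¹ (p.2⁻¹ * p.1⁻¹ * p.2) (p.2⁻¹ * p.1 * p.2))⁻¹ : kˣ) : k) *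
      a (p.2⁻¹ * p.1⁻¹ * p.2, p.2⁻¹)

/-- The antipode of the untwisted double `D(k[G])`: `S(⟨g,x⟩) = ⟨x⁻¹g⁻¹x, x⁻¹⟩`. -/
def ddAntipode0 {k G : Type*} [Field k] [Group G] (a : DD k G) : DD k G :=
  fun p => a (p.2⁻¹ * p.1⁻¹ * p.2, p.2⁻¹)

/-- The operator `φ(x)` on `D^β(k[G])^{comm}`: the linear extension of
`φ(x)(⟨h,y⟩) = (θ_{xhx⁻¹}(x,y)/θ_{xhx⁻¹}(xyx⁻¹,x))·⟨xhx⁻¹, xyx⁻¹⟩`. -/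
def ddPhi {k G : Type*} [Field k] [Group G] (β : G → G → G → kˣ) (x : G) (a : DD k G) :
    DD k G :=
  fun p => ((ddTheta β p.1 x (x⁻¹ * p.2 * x) / ddTheta β p.1 p.2 x : kˣ) : k) *
    a (x⁻¹ * p.1 * x, x⁻¹ * p.2 * x)

/-- The span of the basis elements `⟨g,x⟩` with `gx = xg`, i.e. `D^β(k[G])^{comm}`. -/
def ddCommSpan (k G : Type*) [Field k] [Group G] [DecidableEq G] : Submodule k (DD k G) :=
  Submodule.span k {v : DD k G | ∃ g x : G, g * x = x * g ∧ v = ddBasis g x}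

/-- The underlying space of the twisted group ring `k^α[G]`. -/
abbrev TG (k G : Type*) := G → k

/-- The basis element `1_g` of `k^α[G]`. -/
def tgBasis {k G : Type*} [Field k] [DecidableEq G] (g : G) : TG k G :=
  fun z => if z = g then 1 else 0

/-- The multiplication `1_g·1_h = α(g,h) 1_{gh}` of the twisted group ring `k^α[G]`. -/
def tgMul {k G : Type*} [Field k] [Group G] [Fintype G] (α : G → G → kˣ) (a b : TG k G) :
    TG k G :=
  fun z => ∑ x : G, a x * b (x⁻¹ * z) * (α x (x⁻¹ * z) : k)

/-- The identity `1_e` of `k^α[G]`. -/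
def tgOne (k G : Type*) [Field k] [Group G] [DecidableEq G] : TG k G := tgBasis 1

/-- The inverse `α(g,g⁻¹)⁻¹·1_{g⁻¹}` of the basis element `1_g` in `k^α[G]`. -/
def tgInvBasis {k G : Type*} [Field k] [Group G] [DecidableEq G] (α : G → G → kˣ) (g : G) :
    TG k G :=
  (((α g g⁻¹)⁻¹ : kˣ) : k) • tgBasis g⁻¹

/-- Conjugation `ρ(g)(a) = 1_g · a · (1_g)⁻¹` in the twisted group ring `k^α[G]`. -/
def tgConj {k G : Type*} [Field k] [Group G] [Fintype G] [DecidableEq G]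
    (α : G → G → kˣ) (g : G) (a : TG k G) : TG k G :=
  tgMul α (tgBasis g) (tgMul α a (tgInvBasis α g))

theorem comm_inv_left {G : Type*} [Group G] {g x : G} (h : x * g = g * x) :
    x⁻¹ * g = g * x⁻¹ := by
  rw [eq_mul_inv_iff_mul_eq, mul_assoc, ← h, ← mul_assoc, inv_mul_cancel, one_mul]

theorem comm_inv_mul {G : Type*} [Group G] {g x z : G} (hx : x * g = g * x)
    (hz : z * g = g * z) : (x⁻¹ * z) * g = g * (x⁻¹ * z) := by
  rw [mul_assoc, hz, ← mul_assoc, comm_inv_left hx, mul_assoc]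

/-- The index set `{(g,x) : x ∈ Z(g)}` of the direct sum `⊕_g k^{θ_g}[Z(g)]`. -/
abbrev CentPairs (G : Type*) [Group G] := Σ g : G, {x : G // x * g = g * x}

/-- The underlying space of `⊕_g k^{θ_g}[Z(g)]`. -/
abbrev TY (k G : Type*) [Group G] := CentPairs G → k

/-- The multiplication of `⊕_g k^{θ_g}[Z(g)]`: in the `g`-th summand,
`1_x·1_y = θ_g(x,y)·1_{xy}` for `x, y ∈ Z(g)`, and distinct summands multiply to `0`. -/
def tyMul {k G : Type*} [Field k] [Group G] [Fintype G] [DecidableEq G]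
    (β : G → G → G → kˣ) (a b : TY k G) : TY k G :=
  fun q => ∑ x : {x : G // x * q.1 = q.1 * x},
    a ⟨q.1, x⟩ * b ⟨q.1, ⟨(x : G)⁻¹ * (q.2 : G), comm_inv_mul x.2 q.2.2⟩⟩ *
      (ddTheta β q.1 (x : G) ((x : G)⁻¹ * (q.2 : G)) : k)

/-- The identity of `⊕_g k^{θ_g}[Z(g)]`. -/
def tyOne (k G : Type*) [Field k] [Group G] [DecidableEq G] : TY k G :=
  fun q => if (q.2 : G) = 1 then 1 else 0

/-- The map `⊕_g k^{θ_g}[Z(g)] → D^β(k[G])` sending `1_x` in the `g`-th summand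
to `⟨g,x⟩`. -/
def tyMap {k G : Type*} [Field k] [Group G] [DecidableEq G] (f : TY k G) : DD k G :=
  fun p => if h : p.2 * p.1 = p.1 * p.2 then f ⟨p.1, ⟨p.2, h⟩⟩ else 0

/-- The action of `D^{ββ'}(k[G])` on `A ⊗ B`, assigning to `⟨g,x⟩` the endomorphism
`ρ_A(⟨g,x⟩) ⊗ ρ_B(⟨g,x⟩)` and extending linearly. -/
noncomputable def ddTensorAction {k G A B : Type*} [Field k] [Group G] [Fintype G]
    [DecidableEq G] [AddCommGroup A] [Module k A] [AddCommGroup B] [Module k B]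
    (ρA : DD k G → (A →ₗ[k] A)) (ρB : DD k G → (B →ₗ[k] B)) (a : DD k G) :
    (A ⊗[k] B) →ₗ[k] (A ⊗[k] B) :=
  ∑ p : G × G, a p • TensorProduct.map (ρA (ddBasis p.1 p.2)) (ρB (ddBasis p.1 p.2))

/-- the `θ_g` are "almost cocycles":
`θ_g(x,y)·θ_g(xy,z) = θ_{x⁻¹gx}(y,z)·θ_g(x,yz)`. -/
theorem stmt0 {k G : Type*} [Field k] [Group G] [Fintype G]
    (β : G → G → G → kˣ) (hβ : IsNormalized3Cocycle β) (g x y z : G) :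
    ddTheta β g x y * ddTheta β g (x * y) z =
      ddTheta β (x⁻¹ * g * x) y z * ddTheta β g x (y * z) := by
  have hc := hβ.1
  have h1 := hc g x y z
  have h2 := hc x (x⁻¹*g*x) y z
  have h3 := hc x y ((x*y)⁻¹*g*(x*y)) z
  have h4 := hc x y z ((x*y*z)⁻¹*g*(x*y*z))
  simp only [ddTheta, mul_assoc, mul_inv_rev, inv_mul_cancel_left, mul_inv_cancel_left] at h1 h2 h3 h4 ⊢
  rw [div_mul_div_comm, div_mul_div_comm, div_eq_div_iff_mul_eq_mul]
  set G1 := x⁻¹ * (g * x) with hG1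
  set G2 := y⁻¹ * (x⁻¹ * (g * (x * y))) with hG2
  set G3 := z⁻¹ * (y⁻¹ * (x⁻¹ * (g * (x * (y * z))))) with hG3
  set E := β x (x⁻¹ * (g * (x * y))) z with hE
  set F := β x y (y⁻¹ * (x⁻¹ * (g * (x * (y * z))))) with hF
  set C := β x y z with hC
  set D := β (g * x) y z with hD
  have key : (β g x y * (β g (x * y) z * C)) * (D * β x G1 (y * z)) *
      (β x y G2 * (E * β y G2 z)) * (β (x * y) z G3 * F) =
      (D * β g x (y * z)) * (β x G1 y * (E * β G1 y z)) *
      (β (x * y) G2 z * F) * (C * (β x (y * z) G3 * β y z G3)) := by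
    rw [h1, h2, h3, h4]
  refine mul_right_cancel (b := C * D * E * F) ?_
  calc β g x y * β x y G2 * (β g (x * y) z * β (x * y) z G3) *
        (β y G2 z * β x G1 (y * z)) * (C * D * E * F)
      = (β g x y * (β g (x * y) z * C)) * (D * β x G1 (y * z)) *
        (β x y G2 * (E * β y G2 z)) * (β (x * y) z G3 * F) := by ac_rfl
    _ = (D * β g x (y * z)) * (β x G1 y * (E * β G1 y z)) *
        (β (x * y) G2 z * F) * (C * (β x (y * z) G3 * β y z G3)) := key
    _ = β G1 y z * β y z G3 * (β g x (y * z) * β x (y * z) G3) *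
        (β x G1 y * β (x * y) G2 z) * (C * D * E * F) := by ac_rfl

end StringyOrbifold
end

section
/- Let k be a field, G a finite group, β a normalized 3-cocycle on G with values in kˣ, and g ∈ G. Then the restriction of θ_g to the centralizer Z(g) = {x ∈ G : xg = gx} is a normalized 2-cocycle of Z(g) with values in kˣ: θ_g(x,y)·θ_g(xy,z) = θ_g(y,z)·θ_g(x,yz) for all x,y,z ∈ Z(g), and θ_g(x,e) = θ_g(e,x) = 1 for all x ∈ Z(g). -/
open scoped BigOperators TensorProduct

namespace StringyOrbifold

/-- `θ_g` restricted to the centralizer `Z(g)` is a normalized 2-cocycle. -/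
theorem stmt1 {k G : Type*} [Field k] [Group G] [Fintype G]
    (β : G → G → G → kˣ) (hβ : IsNormalized3Cocycle β) (g : G) :
    (∀ x y z : G, x * g = g * x → y * g = g * y → z * g = g * z →
      ddTheta β g x y * ddTheta β g (x * y) z = ddTheta β g y z * ddTheta β g x (y * z)) ∧
    (∀ x : G, x * g = g * x → ddTheta β g x 1 = 1 ∧ ddTheta β g 1 x = 1) := by
  obtain ⟨hc, hn⟩ := hβ
  refine ⟨?_, ?_⟩
  · intro x y z hx hy hz
    have hxy : (x * y) * g = g * (x * y) := by
      rw [mul_assoc, hy, ← mul_assoc, hx, mul_assoc]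
    have hyz : (y * z) * g = g * (y * z) := by
      rw [mul_assoc, hz, ← mul_assoc, hy, mul_assoc]
    have cx : x⁻¹ * g * x = g := by
      rw [mul_assoc, ← hx, ← mul_assoc, inv_mul_cancel, one_mul]
    have cxy : (x * y)⁻¹ * g * (x * y) = g := by
      rw [mul_assoc, ← hxy, ← mul_assoc, inv_mul_cancel, one_mul]
    have cyz : (y * z)⁻¹ * g * (y * z) = g := by
      rw [mul_assoc, ← hyz, ← mul_assoc, inv_mul_cancel, one_mul]
    have cy : y⁻¹ * g * y = g := by
      rw [mul_assoc, ← hy, ← mul_assoc, inv_mul_cancel, one_mul]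
    have hxyz : (x * y * z) * g = g * (x * y * z) := by
      rw [mul_assoc, hz, ← mul_assoc, hxy, mul_assoc]
    have cxyz : (x * y * z)⁻¹ * g * (x * y * z) = g := by
      rw [mul_assoc, ← hxyz, ← mul_assoc, inv_mul_cancel, one_mul]
    have cxyz' : (x * (y * z))⁻¹ * g * (x * (y * z)) = g := by
      rw [← mul_assoc x y z]; exact cxyz
    simp only [ddTheta, cx, cy, cxy, cyz, cxyz, cxyz']
    have hc1 := hc g x y z
    rw [← hx] at hc1
    have hc2 := hc x y z g
    rw [hz] at hc2
    have hc3 := hc x y g z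
    rw [hy] at hc3
    have hc4 := hc x g y z
    have h1 := congrArg (Units.val) hc1
    have h2 := congrArg (Units.val) hc2
    have h3 := congrArg (Units.val) hc3
    have h4 := congrArg (Units.val) hc4
    push_cast at h1 h2 h3 h4
    rw [Units.ext_iff]
    push_cast
    field_simp
    have hne : ((β x y z : k) * (β x (g * y) z : k) * (β x y (g * z) : k) *
        (β (x * g) y z : k)) ≠ 0 := by
      refine mul_ne_zero (mul_ne_zero (mul_ne_zero ?_ ?_) ?_) ?_ <;> exact Units.ne_zero _
    refine mul_right_cancel₀ hne ?_
    linear_combination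
      ((β x y g : k) * (β x (g * y) z : k) * (β y g z : k)) *
          ((β (x * y) z g : k) * (β x y (g * z) : k)) *
          ((β (x * g) y z : k) * (β x g (y * z) : k)) * h1 +
      ((β (x * g) y z : k) * (β g x (y * z) : k)) *
          ((β (x * y) z g : k) * (β x y (g * z) : k)) *
          ((β (x * g) y z : k) * (β x g (y * z) : k)) * h3 -
      ((β (x * g) y z : k) * (β g x (y * z) : k)) *
          ((β (x * y) g z : k) * (β x y (g * z) : k)) *
          ((β (x * g) y z : k) * (β x g (y * z) : k)) * h2 -
      ((β (x * g) y z : k) * (β g x (y * z) : k)) *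
          ((β (x * y) g z : k) * (β x y (g * z) : k)) *
          ((β x y z : k) * (β x (y * z) g : k) * (β y z g : k)) * h4
  · intro x hx
    constructor <;> simp [ddTheta, (hn _ _).1, (hn _ _).2.1, (hn _ _).2.2]

end StringyOrbifold
end

section
/- Let k be a field, G a finite group, and β a normalized 3-cocycle on G with values in kˣ. Then the multiplication of the twisted Drinfel'd double D^β(k[G]) is associative, and the element Σ_{h∈G} ⟨h,e⟩ is a two-sided multiplicative identity; hence D^β(k[G]) is a unital associative k-algebra. -/
open scoped BigOperators TensorProduct

namespace StringyOrbifold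

lemma theta_mul {k G : Type*} [Field k] [Group G] (β : G → G → G → kˣ)
    (hβ : IsNormalized3Cocycle β) (g x y z : G) :
    (ddTheta β g x y : k) * (ddTheta β g (x*y) z : k)
      = (ddTheta β (x⁻¹*g*x) y z : k) * (ddTheta β g x (y*z) : k) := by
  obtain ⟨hc, hn⟩ := hβ
  have h1 := congrArg (Units.val) (hc g x y z)
  have h2 := congrArg (Units.val) (hc x (x⁻¹*g*x) y z)
  have h3 := congrArg (Units.val) (hc x y ((x*y)⁻¹*g*(x*y)) z)
  have h4 := congrArg (Units.val) (hc x y z ((x*y*z)⁻¹*g*(x*y*z)))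
  simp only [ddTheta, Units.val_mul, Units.val_div_eq_div_val, mul_inv_rev, mul_assoc,
    inv_mul_cancel_left, mul_inv_cancel_left] at h1 h2 h3 h4 ⊢
  set A := ((β g x y : kˣ) : k)
  set B := ((β g (x*y) z : kˣ) : k)
  set X := ((β x y z : kˣ) : k)
  set C := ((β (g*x) y z : kˣ) : k)
  set D := ((β g x (y*z) : kˣ) : k)
  set E := ((β x (x⁻¹*(g*x)) y : kˣ) : k)
  set F := ((β x (x⁻¹*(g*(x*y))) z : kˣ) : k)
  set H := ((β (x⁻¹*(g*x)) y z : kˣ) : k)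
  set I := ((β x (x⁻¹*(g*x)) (y*z) : kˣ) : k)
  set J := ((β x y (y⁻¹*(x⁻¹*(g*(x*y)))) : kˣ) : k)
  set K := ((β y (y⁻¹*(x⁻¹*(g*(x*y)))) z : kˣ) : k)
  set L := ((β (x*y) (y⁻¹*(x⁻¹*(g*(x*y)))) z : kˣ) : k)
  set M := ((β x y (y⁻¹*(x⁻¹*(g*(x*(y*z))))) : kˣ) : k)
  set N := ((β x (y*z) (z⁻¹*(y⁻¹*(x⁻¹*(g*(x*(y*z)))))) : kˣ) : k)
  set P := ((β y z (z⁻¹*(y⁻¹*(x⁻¹*(g*(x*(y*z)))))) : kˣ) : k)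
  set Q := ((β (x*y) z (z⁻¹*(y⁻¹*(x⁻¹*(g*(x*(y*z)))))) : kˣ) : k)
  have key : (A*B*J*Q*K*I) * (F*M*X) = (D*E*H*L*N*P) * (F*M*X) := by
    linear_combination (J*Q*K*F*M*I)*h1 - (J*Q*K*F*M*D)*h2 + (D*E*H*F*M*Q)*h3 -
      (D*E*H*F*M*L)*h4
  have hFMX : F*M*X ≠ 0 := by
    simp [F, M, X, mul_ne_zero, Units.ne_zero]
  have key2 : A*B*J*Q*K*I = D*E*H*L*N*P := mul_right_cancel₀ hFMX key
  have hE : E ≠ 0 := Units.ne_zero _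
  have hL : L ≠ 0 := Units.ne_zero _
  have hK : K ≠ 0 := Units.ne_zero _
  have hI : I ≠ 0 := Units.ne_zero _
  field_simp
  linear_combination key2

lemma theta_one_left {k G : Type*} [Field k] [Group G] (β : G → G → G → kˣ)
    (hβ : IsNormalized3Cocycle β) (g y : G) : ddTheta β g 1 y = 1 := by
  simp [ddTheta, (hβ.2 _ _).1, (hβ.2 _ _).2.1]

lemma theta_one_right {k G : Type*} [Field k] [Group G] (β : G → G → G → kˣ)
    (hβ : IsNormalized3Cocycle β) (g x : G) : ddTheta β g x 1 = 1 := by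
  simp [ddTheta, (hβ.2 _ _).2.1, (hβ.2 _ _).2.2]

lemma ddOne_apply {k G : Type*} [Field k] [Group G] [Fintype G] [DecidableEq G] (p : G × G) :
    ddOne k G p = if p.2 = 1 then 1 else 0 := by
  simp only [ddOne, ddBasis, Finset.sum_apply, Prod.ext_iff]
  by_cases h : p.2 = 1 <;> simp [h]

/-- `D^β(k[G])` is a unital associative `k`-algebra with
identity `Σ_{h∈G} ⟨h,e⟩`. -/
theorem stmt2 {k G : Type*} [Field k] [Group G] [Fintype G] [DecidableEq G]
    (β : G → G → G → kˣ) (hβ : IsNormalized3Cocycle β) :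
    (∀ a b c : DD k G, ddMul β (ddMul β a b) c = ddMul β a (ddMul β b c)) ∧
    (∀ a : DD k G, ddMul β (ddOne k G) a = a ∧ ddMul β a (ddOne k G) = a) := by
  constructor
  · intro a b c
    funext p
    obtain ⟨g, w⟩ := p
    simp only [ddMul, Finset.sum_mul, Finset.mul_sum]
    rw [Finset.sum_comm]
    refine Finset.sum_congr rfl fun x _ => ?_
    refine Fintype.sum_equiv (Equiv.mulLeft x⁻¹) _ _ fun y => ?_
    simp only [Equiv.coe_mulLeft]
    have tm := theta_mul β hβ g x (x⁻¹*y) (y⁻¹*w)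
    simp only [mul_inv_cancel_left, mul_assoc, inv_mul_cancel_left, mul_inv_rev] at tm ⊢
    linear_combination (a (g, x) * b (x⁻¹ * (g * x), x⁻¹ * y) * c (y⁻¹ * (g * y), y⁻¹ * w)) * tm
  · intro a
    constructor
    · funext p
      simp only [ddMul, ddOne_apply]
      rw [Finset.sum_eq_single 1]
      · simp [theta_one_left β hβ]
      · intro x _ hx; simp [hx]
      · simp
    · funext p
      simp only [ddMul, ddOne_apply]
      rw [Finset.sum_eq_single p.2]
      · simp [theta_one_right β hβ]
      · intro x _ hx
        rw [if_neg fun h => hx (by rwa [inv_mul_eq_one] at h)]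
        ring
      · simp


end StringyOrbifold
end

section
/- Let k be a field, G a finite group, and β a normalized 3-cocycle on G with values in kˣ. Then the element v⁻¹ := Σ_{g∈G} ⟨g,g⟩ is central in the twisted Drinfel'd double D^β(k[G]), i.e. v⁻¹·a = a·v⁻¹ for every a ∈ D^β(k[G]). -/
open scoped BigOperators TensorProduct

namespace StringyOrbifold

theorem vsum_apply {k G : Type*} [Field k] [Fintype G] [DecidableEq G] (g x : G) :
    (∑ h : G, (ddBasis h h : DD k G)) (g, x) = if x = g then (1 : k) else 0 := by
  rw [Finset.sum_apply]
  by_cases hxg : x = g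
  · subst hxg
    rw [if_pos rfl, Finset.sum_eq_single x]
    · simp [ddBasis]
    · intro b _ hb
      simp only [ddBasis, Prod.mk.injEq]
      exact if_neg fun h => hb h.2.symm
    · intro h
      exact absurd (Finset.mem_univ _) h
  · rw [if_neg hxg]
    exact Finset.sum_eq_zero fun b _ => by
      simp only [ddBasis, Prod.mk.injEq]
      exact if_neg fun h => hxg (h.2.trans h.1.symm)

theorem theta_aux {k G : Type*} [Field k] [Group G] (β : G → G → G → kˣ) (g x : G) :
    ddTheta β g g x = ddTheta β g x (x⁻¹ * g * x) := by
  unfold ddTheta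
  have h1 : (g * x)⁻¹ * g * (g * x) = x⁻¹ * g * x := by group
  have h2 : g⁻¹ * g * g = g := by group
  have h3 : (x * (x⁻¹ * g * x))⁻¹ * g * (x * (x⁻¹ * g * x)) = x⁻¹ * g * x := by group
  rw [h1, h2, h3, mul_comm (β g g x), mul_div_cancel_right, mul_div_cancel_right]

/-- `v⁻¹ = Σ_{g∈G} ⟨g,g⟩` is central in `D^β(k[G])`. -/
theorem stmt4 {k G : Type*} [Field k] [Group G] [Fintype G] [DecidableEq G]
    (β : G → G → G → kˣ) (hβ : IsNormalized3Cocycle β) :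
    ∀ a : DD k G,
      ddMul β (∑ g : G, ddBasis g g) a = ddMul β a (∑ g : G, ddBasis g g) := by
  intro a
  funext p
  obtain ⟨g, t⟩ := p
  unfold ddMul
  simp only [vsum_apply]
  rw [Finset.sum_eq_single g, Finset.sum_eq_single (g⁻¹ * t)]
  · -- main equality of the two surviving terms
    have e2 : (g⁻¹ * t)⁻¹ * t = (g⁻¹ * t)⁻¹ * g * (g⁻¹ * t) := by group
    have e3 : g⁻¹ * g * g = g := by group
    simp only []
    rw [if_pos trivial, e2, if_pos rfl, one_mul, mul_one, e3, ← theta_aux]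
  · -- other terms on the right vanish
    intro b _ hb
    rw [if_neg, mul_zero, zero_mul]
    intro h
    apply hb
    have h' : t = g * b := by
      have := congrArg (fun z => b * z) h
      simpa [mul_assoc] using this
    rw [h']
    group
  · intro h
    exact absurd (Finset.mem_univ _) h
  · -- other terms on the left vanish
    intro b _ hb
    rw [if_neg hb, zero_mul, zero_mul]
  · intro h
    exact absurd (Finset.mem_univ _) h

end StringyOrbifold
end

section
/- Let k be a field, G a finite group, and β a normalized 3-cocycle on G with values in kˣ. Then the k-linear map Δ : D^β(k[G]) → D^β(k[G]) ⊗_k D^β(k[G]) defined on basis elements by Δ(⟨g,x⟩) = Σ_{(g₁,g₂): g₁g₂ = g} γ_x(g₁,g₂)·⟨g₁,x⟩ ⊗ ⟨g₂,x⟩ is a homomorphism of unital k-algebras, where the tensor product carries the componentwise multiplication. -/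
open scoped BigOperators TensorProduct

namespace StringyOrbifold

theorem stmt5_key {k G : Type*} [Field k] [Group G]
    (β : G → G → G → kˣ) (hβ : IsNormalized3Cocycle β) (a b x y : G) :
    ddGamma β (x*y) a b * ddTheta β (a*b) x y =
      ddGamma β x a b * ddGamma β y (x⁻¹*a*x) (x⁻¹*b*x) * ddTheta β a x y *
        ddTheta β b x y := by
  obtain ⟨hc, hn⟩ := hβ
  have h1 := hc a b x y
  have h2 := hc a x y ((x*y)⁻¹*b*(x*y))
  have h3 := hc a x (x⁻¹*b*x) y
  have h4 := hc x (x⁻¹*a*x) (x⁻¹*b*x) y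
  have h5 := hc x (x⁻¹*a*x) y ((x*y)⁻¹*b*(x*y))
  have h6 := hc x y ((x*y)⁻¹*a*(x*y)) ((x*y)⁻¹*b*(x*y))
  rw [show y * ((x*y)⁻¹*b*(x*y)) = x⁻¹*b*x*y by group] at h2 h5
  rw [show x * (x⁻¹*b*x) = b*x by group] at h3
  rw [show x * (x⁻¹*a*x) = a*x by group] at h4 h5
  rw [show x⁻¹*a*x*y = y * ((x*y)⁻¹*a*(x*y)) by group] at h5
  have M : (β a b x * β a (b*x) y * β b x y) *
      (β a x y * β a (x*y) ((x*y)⁻¹*b*(x*y)) * β x y ((x*y)⁻¹*b*(x*y))) *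
      (β x (x⁻¹*a*x) (x⁻¹*b*x) * β x (x⁻¹*a*x*(x⁻¹*b*x)) y * β (x⁻¹*a*x) (x⁻¹*b*x) y) *
      (β x y ((x*y)⁻¹*a*(x*y)) * β x (y*((x*y)⁻¹*a*(x*y))) ((x*y)⁻¹*b*(x*y)) *
        β y ((x*y)⁻¹*a*(x*y)) ((x*y)⁻¹*b*(x*y))) *
      (β (a*x) (x⁻¹*b*x) y * β a x (x⁻¹*b*x*y)) *
      (β (a*x) y ((x*y)⁻¹*b*(x*y)) * β x (x⁻¹*a*x) (x⁻¹*b*x*y)) =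
      (β (a*b) x y * β a b (x*y)) *
      (β (a*x) y ((x*y)⁻¹*b*(x*y)) * β a x (x⁻¹*b*x*y)) *
      (β (a*x) (x⁻¹*b*x) y * β x (x⁻¹*a*x) (x⁻¹*b*x*y)) *
      (β (x*y) ((x*y)⁻¹*a*(x*y)) ((x*y)⁻¹*b*(x*y)) *
        β x y ((x*y)⁻¹*a*(x*y)*((x*y)⁻¹*b*(x*y)))) *
      (β a x (x⁻¹*b*x) * β a (b*x) y * β x (x⁻¹*b*x) y) *
      (β x (x⁻¹*a*x) y * β x (y*((x*y)⁻¹*a*(x*y))) ((x*y)⁻¹*b*(x*y)) *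
        β (x⁻¹*a*x) y ((x*y)⁻¹*b*(x*y))) := by
    rw [h1, h2, h4, h6, h3, h5]
  have hM := congrArg (Units.val : kˣ → k) M
  rw [Units.ext_iff]
  simp only [ddGamma, ddTheta, Units.val_mul, Units.val_div_eq_div_val]
  rw [show y⁻¹*(x⁻¹*a*x)*y = (x*y)⁻¹*a*(x*y) by group,
      show y⁻¹*(x⁻¹*b*x)*y = (x*y)⁻¹*b*(x*y) by group,
      show x⁻¹*(a*b)*x = x⁻¹*a*x*(x⁻¹*b*x) by group,
      show (x*y)⁻¹*(a*b)*(x*y) = (x*y)⁻¹*a*(x*y)*((x*y)⁻¹*b*(x*y)) by group]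
  refine mul_right_cancel₀ (b := (((β a b x * β a (b*x) y * β b x y) *
      (β a x y * β a (x*y) ((x*y)⁻¹*b*(x*y)) * β x y ((x*y)⁻¹*b*(x*y))) *
      (β x (x⁻¹*a*x) (x⁻¹*b*x) * β x (x⁻¹*a*x*(x⁻¹*b*x)) y * β (x⁻¹*a*x) (x⁻¹*b*x) y) *
      (β x y ((x*y)⁻¹*a*(x*y)) * β x (y*((x*y)⁻¹*a*(x*y))) ((x*y)⁻¹*b*(x*y)) *
        β y ((x*y)⁻¹*a*(x*y)) ((x*y)⁻¹*b*(x*y))) *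
      (β (a*x) (x⁻¹*b*x) y * β a x (x⁻¹*b*x*y)) *
      (β (a*x) y ((x*y)⁻¹*b*(x*y)) * β x (x⁻¹*a*x) (x⁻¹*b*x*y)) : kˣ) : k))
    (Units.ne_zero _) ?_
  conv_rhs => rw [hM]
  push_cast [Units.val_mul]
  field_simp


theorem stmt5_gamma_one {k G : Type*} [Field k] [Group G]
    (β : G → G → G → kˣ) (hβ : IsNormalized3Cocycle β) (g1 g2 : G) :
    ddGamma β 1 g1 g2 = 1 := by
  simp [ddGamma, (hβ.2 g1 g2).2.2, (hβ.2 _ _).1, (hβ.2 _ _).2.1]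

/-- the comultiplication `Δ` is a homomorphism of unital `k`-algebras
`D^β(k[G]) → D^β(k[G]) ⊗ D^β(k[G])`. -/
theorem stmt5 {k G : Type*} [Field k] [Group G] [Fintype G] [DecidableEq G]
    (β : G → G → G → kˣ) (hβ : IsNormalized3Cocycle β) :
    (∀ g x : G, ddComul β (ddBasis g x) =
      ∑ q : G × G, if q.1 * q.2 = g then
        (ddGamma β x q.1 q.2 : k) • ddTensor (ddBasis q.1 x) (ddBasis q.2 x) else 0) ∧
    (∀ a b : DD k G, ddComul β (a + b) = ddComul β a + ddComul β b) ∧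
    (∀ (c : k) (a : DD k G), ddComul β (c • a) = c • ddComul β a) ∧
    (∀ a b : DD k G, ddComul β (ddMul β a b) = dd2Mul β β (ddComul β a) (ddComul β b)) ∧
    ddComul β (ddOne k G) = ddTensor (ddOne k G) (ddOne k G) := by
  obtain ⟨hc, hn⟩ := hβ
  refine ⟨?_, ?_, ?_, ?_, ?_⟩
  · -- part 1
    intro g x
    funext p
    obtain ⟨⟨g1, u⟩, g2, v⟩ := p
    simp only [ddComul, ddBasis, ddTensor, Finset.sum_apply,
      Pi.smul_apply, smul_eq_mul, Pi.zero_apply, apply_ite (fun f : DD2 k G => f ((g1,u),(g2,v)))]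
    rw [Finset.sum_eq_single (g1, g2)]
    · simp only [Prod.mk.injEq]
      by_cases hux : u = x <;> by_cases hvx : v = x <;>
        by_cases hg : g1 * g2 = g <;>
        simp_all <;> try split_ifs <;> simp_all
      all_goals aesop
    · intro q _ hq
      by_cases h1 : (g1, u) = (q.1, x)
      · by_cases h2 : (g2, v) = (q.2, x)
        · exact absurd (Prod.ext (Prod.mk.injEq .. ▸ h1).1.symm
            (Prod.mk.injEq .. ▸ h2).1.symm) hq
        · simp [h2]
      · simp [h1]
    · simp
  · -- part 2
    intro a b
    funext p
    simp only [ddComul, Pi.add_apply]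
    split_ifs <;> [ring; simp]
  · -- part 3
    intro c a
    funext p
    simp only [ddComul, Pi.smul_apply, smul_eq_mul]
    split_ifs <;> [ring; simp]
  · -- part 4
    intro A B
    funext p
    obtain ⟨⟨g1, u⟩, g2, v⟩ := p
    simp only [ddComul, ddMul, dd2Mul, ite_mul, zero_mul, Finset.sum_ite_eq,
      Finset.mem_univ, if_true, mul_right_inj]
    by_cases huv : u = v
    · subst huv
      simp only [eq_self_iff_true, if_true, ite_true]
      rw [Finset.mul_sum]
      refine Finset.sum_congr rfl fun x _ => ?_
      rw [show x⁻¹ * (g1 * g2) * x = x⁻¹ * g1 * x * (x⁻¹ * g2 * x) by group]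
      have key := stmt5_key β ⟨hc, hn⟩ g1 g2 x (x⁻¹ * u)
      rw [mul_inv_cancel_left] at key
      have keyk := congrArg (Units.val : kˣ → k) key
      simp only [Units.val_mul] at keyk
      linear_combination (A (g1 * g2, x) * B (x⁻¹ * g1 * x * (x⁻¹ * g2 * x), x⁻¹ * u)) * keyk
    · simp [huv]
  · -- part 5
    funext p
    obtain ⟨⟨g1, u⟩, g2, v⟩ := p
    simp only [ddComul, ddOne, ddBasis, ddTensor, Finset.sum_apply, Prod.mk.injEq]
    by_cases hu : u = 1 <;> by_cases hv : v = 1 <;>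
      simp_all [Finset.sum_ite_eq, stmt5_gamma_one β ⟨hc, hn⟩] <;>
      try split_ifs <;> simp_all
    all_goals aesop

end StringyOrbifold
end

section
/- Let k be a field, G a finite group, and β a normalized 3-cocycle on G with values in kˣ. Let R := Σ_{g∈G} ⟨g,e⟩ ⊗ (Σ_{h∈G} ⟨h,g⟩) in D^β(k[G]) ⊗_k D^β(k[G]). Then R intertwines the comultiplication and its opposite: for every a ∈ D^β(k[G]), Δ^op(a)·R = R·Δ(a), where Δ^op := τ ∘ Δ and τ is the flip of the two tensor factors. -/
open scoped BigOperators TensorProduct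

namespace StringyOrbifold

/-- the `R`-matrix `R = Σ_g ⟨g,e⟩ ⊗ ⟨1,g⟩` intertwines `Δ` and `Δ^op`. -/
theorem stmt7 {k G : Type*} [Field k] [Group G] [Fintype G] [DecidableEq G]
    (β : G → G → G → kˣ) (hβ : IsNormalized3Cocycle β) :
    ∀ a : DD k G,
      dd2Mul β β (ddSwap (ddComul β a))
        (∑ g : G, ddTensor (ddBasis g 1) (∑ h : G, ddBasis h g)) =
      dd2Mul β β (∑ g : G, ddTensor (ddBasis g 1) (∑ h : G, ddBasis h g))
        (ddComul β a) := by
  intro a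
  have hb1 : ∀ g h : G, β 1 g h = 1 := fun g h => (hβ.2 g h).1
  have hb2 : ∀ g h : G, β g 1 h = 1 := fun g h => (hβ.2 g h).2.1
  have hb3 : ∀ g h : G, β g h 1 = 1 := fun g h => (hβ.2 g h).2.2
  have hR : ∀ q : (G × G) × (G × G),
      ((∑ g : G, ddTensor (ddBasis g 1) (∑ h : G, ddBasis h g) : DD2 k G)) q
        = if q.1.2 = 1 ∧ q.2.2 = q.1.1 then 1 else 0 := by
    intro q
    simp only [Finset.sum_apply, ddTensor, ddBasis, Prod.ext_iff]
    by_cases h1 : q.1.2 = 1 <;> by_cases h2 : q.2.2 = q.1.1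
    · simp [h1, h2, Finset.filter_eq, Finset.filter_eq']
    · simp [h1, h2, show ¬ q.1.1 = q.2.2 from fun h => h2 h.symm]
    · simp [h1]
    · simp [h1]
  funext p
  obtain ⟨⟨A, X⟩, B, Y⟩ := p
  simp only [dd2Mul]
  simp only [hR]
  rw [Fintype.sum_eq_single X, Fintype.sum_eq_single X,
    Fintype.sum_eq_single (1 : G), Fintype.sum_eq_single A]
  rotate_left
  · -- inner RHS sum: only y = A survives
    intro x hx
    simp [hx]
  · -- outer RHS sum: only x = 1 survives
    intro x hx
    refine Finset.sum_eq_zero fun y _ => ?_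
    simp [hx]
  · -- inner LHS sum: only y = X survives
    intro x hx
    simp [ddSwap, ddComul, hx]
  · -- outer LHS sum: only x = X survives
    intro x hx
    refine Finset.sum_eq_zero fun y _ => ?_
    simp [inv_mul_eq_one, hx]
  -- main term
  have th3 : ∀ g x : G, ddTheta β g x 1 = 1 := by
    intro g x; simp [ddTheta, hb2, hb3]
  have th2 : ∀ g y : G, ddTheta β g 1 y = 1 := by
    intro g y; simp [ddTheta, hb1, hb2]
  by_cases hY : Y = A * X
  · subst hY
    simp only [ddSwap, ddComul, ddGamma, ddTheta, mul_one, one_mul, inv_one, mul_assoc,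
      inv_mul_cancel, inv_mul_cancel_left, mul_inv_cancel_left, mul_inv_rev,
      hb1, hb2, hb3, if_true, and_self, eq_self_iff_true, if_pos rfl]
    push_cast
    field_simp
  · have h1 : ¬ (X⁻¹ * Y = X⁻¹ * A * X) := fun h => hY (by rw [mul_assoc] at h; exact mul_left_cancel h)
    have h2 : ¬ (X = A⁻¹ * Y) := fun h => hY (by rw [h, mul_inv_cancel_left])
    simp [ddSwap, ddComul, h1, h2]

end StringyOrbifold
end

section
/- Let k be a field, G a finite group, β a normalized 3-cocycle on G with values in kˣ, and let (A, ρ) be a left module over D^β(k[G]) with π_g := ρ(⟨g,e⟩) and A_g := π_g(A). Then for all g, x ∈ G: (i) ρ(⟨g,x⟩) = π_g ∘ ρ(⟨g,x⟩) ∘ π_{x⁻¹gx}, so ρ(⟨g,x⟩) vanishes on A_h for h ≠ x⁻¹gx and maps A into A_g; and (ii) ρ(⟨g,x⟩) restricts to a k-linear isomorphism from A_{x⁻¹gx} onto A_g, with inverse the restriction of θ_{x⁻¹gx}(x⁻¹,x)⁻¹ · ρ(⟨x⁻¹gx, x⁻¹⟩). -/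
open scoped BigOperators TensorProduct

namespace StringyOrbifold

lemma ddTheta_one_left {k G : Type*} [Field k] [Group G] {β : G → G → G → kˣ}
    (hβ : IsNormalized3Cocycle β) (g y : G) : ddTheta β g 1 y = 1 := by
  obtain ⟨-, hn⟩ := hβ
  simp [ddTheta, hn, (hn g y).2.1]

lemma ddTheta_one_right {k G : Type*} [Field k] [Group G] {β : G → G → G → kˣ}
    (hβ : IsNormalized3Cocycle β) (g x : G) : ddTheta β g x 1 = 1 := by
  obtain ⟨-, hn⟩ := hβ
  simp [ddTheta, hn]

lemma ddTheta_inv {k G : Type*} [Field k] [Group G] {β : G → G → G → kˣ}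
    (hβ : IsNormalized3Cocycle β) (g x : G) :
    ddTheta β g x x⁻¹ = ddTheta β (x⁻¹ * g * x) x⁻¹ x := by
  obtain ⟨hc, hn⟩ := hβ
  have r1 : x * (x⁻¹ * g * x) = g * x := by group
  have r2 : (x⁻¹ * g * x) * x⁻¹ = x⁻¹ * g := by group
  have r3 : x⁻¹⁻¹ * (x⁻¹ * g * x) * x⁻¹ = g := by group
  have e1 := hc g x x⁻¹ x
  have e2 := hc x x⁻¹ g x
  have e3 := hc x (x⁻¹ * g * x) x⁻¹ x
  have e4 := hc x x⁻¹ x (x⁻¹ * g * x)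
  simp only [mul_inv_cancel, inv_mul_cancel, one_mul, mul_one, inv_one, r1, r2, r3, hn,
    (hn _ _).1, (hn _ _).2.1, (hn _ _).2.2] at e1 e2 e3 e4
  unfold ddTheta
  simp only [mul_inv_cancel, inv_mul_cancel, one_mul, mul_one, inv_one, r3]
  rw [Units.ext_iff] at e1 e2 e3 e4 ⊢
  simp only [Units.val_mul, Units.val_div_eq_div_val] at e1 e2 e3 e4 ⊢
  rw [div_eq_div_iff (Units.ne_zero _) (Units.ne_zero _)]
  have hKD : ((β x x⁻¹ x : kˣ) : k) * ((β x (x⁻¹ * g) x : kˣ) : k) ≠ 0 :=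
    mul_ne_zero (Units.ne_zero _) (Units.ne_zero _)
  apply mul_right_cancel₀ hKD
  linear_combination
    (((β x x⁻¹ g : kˣ) : k) * ((β x (x⁻¹ * g) x : kˣ) : k) * ((β x⁻¹ g x : kˣ) : k)) * e1 +
    (((β (g * x) x⁻¹ x : kˣ) : k)) * e2 -
    (((β x x⁻¹ x : kˣ) : k) * ((β x⁻¹ x (x⁻¹ * g * x) : kˣ) : k)) * e3 -
    (((β (g * x) x⁻¹ x : kˣ) : k)) * e4

lemma ddMul_basis {k G : Type*} [Field k] [Group G] [Fintype G] [DecidableEq G]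
    (β : G → G → G → kˣ) (g x h y : G) :
    ddMul β (ddBasis g x) (ddBasis h y) =
      if h = x⁻¹ * g * x then (ddTheta β g x y : k) • (ddBasis g (x * y) : DD k G)
      else (0 : DD k G) := by
  funext p
  obtain ⟨p1, p2⟩ := p
  simp only [ddMul, ddBasis]
  rw [Finset.sum_eq_single x]
  · by_cases h1 : p1 = g
    · subst h1
      by_cases h2 : h = x⁻¹ * p1 * x
      · subst h2
        by_cases h3 : p2 = x * y
        · subst h3
          simp [ddBasis, inv_mul_cancel_left]
        · have hy : ¬ (x⁻¹ * p2 = y) := fun hh => h3 (by rw [← hh, mul_inv_cancel_left])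
          simp [ddBasis, hy, Prod.ext_iff, h3]
      · have : ¬ (x⁻¹ * p1 * x = h) := fun hh => h2 hh.symm
        simp [ddBasis, Prod.ext_iff, this, h2]
    · simp only [Prod.mk.injEq, h1, false_and, if_false, zero_mul]
      split
      · simp [ddBasis, Prod.ext_iff, h1]
      · rfl
  · intro z _ hz
    simp [Prod.ext_iff, hz]
  · intro hx
    exact absurd (Finset.mem_univ x) hx

/-- in a left `D^β(k[G])`-module, `ρ(⟨g,x⟩)` vanishes off `A_{x⁻¹gx}`,
maps into `A_g`, and restricts to an isomorphism `A_{x⁻¹gx} ≅ A_g` with inverse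
`θ_{x⁻¹gx}(x⁻¹,x)⁻¹ ρ(⟨x⁻¹gx,x⁻¹⟩)`. -/
theorem stmt9 {k G : Type*} [Field k] [Group G] [Fintype G] [DecidableEq G]
    (β : G → G → G → kˣ) (hβ : IsNormalized3Cocycle β)
    {A : Type*} [AddCommGroup A] [Module k A]
    (ρ : DD k G → (A →ₗ[k] A))
    (hadd : ∀ a b : DD k G, ρ (a + b) = ρ a + ρ b)
    (hsmul : ∀ (c : k) (a : DD k G), ρ (c • a) = c • ρ a)
    (hmul : ∀ a b : DD k G, ρ (ddMul β a b) = ρ a ∘ₗ ρ b)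
    (hone : ρ (ddOne k G) = LinearMap.id) :
    (∀ g x : G, ρ (ddBasis g x) =
        ρ (ddBasis g 1) ∘ₗ ρ (ddBasis g x) ∘ₗ ρ (ddBasis (x⁻¹ * g * x) 1)) ∧
    (∀ g x h : G, h ≠ x⁻¹ * g * x →
        ∀ a ∈ LinearMap.range (ρ (ddBasis h 1)), ρ (ddBasis g x) a = 0) ∧
    (∀ (g x : G) (a : A), ρ (ddBasis g x) a ∈ LinearMap.range (ρ (ddBasis g 1))) ∧
    (∀ g x : G, ∀ a ∈ LinearMap.range (ρ (ddBasis (x⁻¹ * g * x) 1)),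
        (((ddTheta β (x⁻¹ * g * x) x⁻¹ x)⁻¹ : kˣ) : k) •
          ρ (ddBasis (x⁻¹ * g * x) x⁻¹) (ρ (ddBasis g x) a) = a) ∧
    (∀ g x : G, ∀ b ∈ LinearMap.range (ρ (ddBasis g 1)),
        ρ (ddBasis g x) ((((ddTheta β (x⁻¹ * g * x) x⁻¹ x)⁻¹ : kˣ) : k) •
          ρ (ddBasis (x⁻¹ * g * x) x⁻¹) b) = b) ∧
    (∀ g x : G,
        Submodule.map (ρ (ddBasis g x)) (LinearMap.range (ρ (ddBasis (x⁻¹ * g * x) 1)))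
          = LinearMap.range (ρ (ddBasis g 1))) := by
  have hρ0 : ρ (0 : DD k G) = 0 := by
    simpa using hsmul 0 0
  have P1 : ∀ g x : G, ρ (ddBasis g 1) ∘ₗ ρ (ddBasis g x) = ρ (ddBasis g x) := by
    intro g x
    rw [← hmul, ddMul_basis, if_pos (by group)]
    simp only [ddTheta_one_left hβ, Units.val_one, one_smul, one_mul]
  have P2 : ∀ g x : G, ρ (ddBasis g x) ∘ₗ ρ (ddBasis (x⁻¹ * g * x) 1) = ρ (ddBasis g x) := by
    intro g x
    rw [← hmul, ddMul_basis, if_pos rfl]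
    simp only [ddTheta_one_right hβ, Units.val_one, one_smul, mul_one]
  have P3 : ∀ g x h : G, h ≠ x⁻¹ * g * x →
      ρ (ddBasis g x) ∘ₗ ρ (ddBasis h 1) = 0 := by
    intro g x h hne
    rw [← hmul, ddMul_basis, if_neg hne, hρ0]
  have P4 : ∀ g x : G, ρ (ddBasis (x⁻¹ * g * x) x⁻¹) ∘ₗ ρ (ddBasis g x)
      = ((ddTheta β (x⁻¹ * g * x) x⁻¹ x : kˣ) : k) • ρ (ddBasis (x⁻¹ * g * x) 1) := by
    intro g x
    rw [← hmul, ddMul_basis, if_pos (by group), hsmul]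
    simp only [inv_mul_cancel]
  have P5 : ∀ g x : G, ρ (ddBasis g x) ∘ₗ ρ (ddBasis (x⁻¹ * g * x) x⁻¹)
      = ((ddTheta β (x⁻¹ * g * x) x⁻¹ x : kˣ) : k) • ρ (ddBasis g 1) := by
    intro g x
    rw [← hmul, ddMul_basis, if_pos rfl, hsmul, ← ddTheta_inv hβ]
    simp only [mul_inv_cancel]
  have S3 : ∀ (g x : G) (a : A), ρ (ddBasis g x) a ∈ LinearMap.range (ρ (ddBasis g 1)) := by
    intro g x a
    exact ⟨ρ (ddBasis g x) a, LinearMap.congr_fun (P1 g x) a⟩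
  have S4 : ∀ g x : G, ∀ a ∈ LinearMap.range (ρ (ddBasis (x⁻¹ * g * x) 1)),
      (((ddTheta β (x⁻¹ * g * x) x⁻¹ x)⁻¹ : kˣ) : k) •
        ρ (ddBasis (x⁻¹ * g * x) x⁻¹) (ρ (ddBasis g x) a) = a := by
    intro g x a ha
    obtain ⟨a', rfl⟩ := ha
    have t := LinearMap.congr_fun (P4 g x) (ρ (ddBasis (x⁻¹ * g * x) 1) a')
    simp only [LinearMap.comp_apply, LinearMap.smul_apply] at t
    rw [t, smul_smul, ← Units.val_mul, inv_mul_cancel, Units.val_one, one_smul]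
    exact LinearMap.congr_fun (P1 (x⁻¹ * g * x) 1) a'
  have S5 : ∀ g x : G, ∀ b ∈ LinearMap.range (ρ (ddBasis g 1)),
      ρ (ddBasis g x) ((((ddTheta β (x⁻¹ * g * x) x⁻¹ x)⁻¹ : kˣ) : k) •
        ρ (ddBasis (x⁻¹ * g * x) x⁻¹) b) = b := by
    intro g x b hb
    obtain ⟨b', rfl⟩ := hb
    rw [map_smul]
    have t := LinearMap.congr_fun (P5 g x) (ρ (ddBasis g 1) b')
    simp only [LinearMap.comp_apply, LinearMap.smul_apply] at t
    rw [t, smul_smul, ← Units.val_mul, inv_mul_cancel, Units.val_one, one_smul]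
    exact LinearMap.congr_fun (P1 g 1) b'
  refine ⟨?_, ?_, S3, S4, S5, ?_⟩
  · intro g x
    rw [P2, P1]
  · intro g x h hne a ha
    obtain ⟨a', rfl⟩ := ha
    have t := LinearMap.congr_fun (P3 g x h hne) a'
    simpa using t
  · intro g x
    apply le_antisymm
    · rintro b ⟨a, -, rfl⟩
      exact S3 g x a
    · rintro b hb
      refine ⟨(((ddTheta β (x⁻¹ * g * x) x⁻¹ x)⁻¹ : kˣ) : k) •
        ρ (ddBasis (x⁻¹ * g * x) x⁻¹) b, ?_, S5 g x b hb⟩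
      exact Submodule.smul_mem _ _ (S3 (x⁻¹ * g * x) x⁻¹ b)

end StringyOrbifold
end

section
/- Let k be a field, G a finite group, and β a normalized 3-cocycle on G with values in kˣ. For each g ∈ G let k^{θ_g}[Z(g)] denote the twisted group ring of the centralizer Z(g): the free k-module with basis {1_x : x ∈ Z(g)} and multiplication 1_x·1_y = θ_g(x,y)·1_{xy} (a unital associative k-algebra since θ_g restricts to a normalized 2-cocycle on Z(g)). Then the subalgebra D^β(k[G])^comm spanned by {⟨g,x⟩ : gx = xg} is isomorphic as a k-algebra to the direct product ⊕_{g∈G} k^{θ_g}[Z(g)], via the map sending the basis element 1_x of the g-th summand to ⟨g,x⟩; in particular ⟨g,x⟩·⟨g,y⟩ = θ_g(x,y)·⟨g,xy⟩ for x,y ∈ Z(g), and ⟨g,x⟩·⟨h,y⟩ = 0 for g ≠ h with x ∈ Z(g), y ∈ Z(h). -/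
open scoped BigOperators TensorProduct

namespace StringyOrbifold

/- ### Auxiliary lemmas for stmt13 -/

theorem centPair_eq {G : Type*} [Group G] {a a' b b' : G} (ha : a = a') (hb : b = b')
    (h : b * a = a * b) (h' : b' * a' = a' * b') :
    (⟨a, ⟨b, h⟩⟩ : CentPairs G) = ⟨a', ⟨b', h'⟩⟩ := by
  subst ha; subst hb; rfl

theorem comm_mul_left {G : Type*} [Group G] {g x w : G} (hx : x * g = g * x)
    (hw : w * g = g * w) : (x * w) * g = g * (x * w) := by
  rw [mul_assoc, hw, ← mul_assoc, hx, mul_assoc]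

theorem conj_eq_self {G : Type*} [Group G] {g x : G} (hx : x * g = g * x) :
    x⁻¹ * g * x = g := by
  rw [mul_assoc, ← hx, ← mul_assoc, inv_mul_cancel, one_mul]

theorem sum_comm_subtype {k G : Type*} [Field k] [Group G] [Fintype G] [DecidableEq G]
    (g : G) (F : G → k) (hF : ∀ x : G, ¬(x * g = g * x) → F x = 0) :
    ∑ x : G, F x = ∑ x : {x : G // x * g = g * x}, F (x : G) := by
  rw [← Finset.sum_subtype (Finset.univ.filter (fun x => x * g = g * x))
    (by simp) F]
  rw [Finset.sum_filter_of_ne (fun x _ hne => by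
    by_contra hc; exact hne (hF x hc))]

theorem tyMap_add {k G : Type*} [Field k] [Group G] [DecidableEq G] (f f' : TY k G) :
    tyMap (f + f') = tyMap f + tyMap f' := by
  funext p
  simp only [tyMap, Pi.add_apply]
  split <;> simp

theorem tyMap_smul {k G : Type*} [Field k] [Group G] [DecidableEq G] (c : k) (f : TY k G) :
    tyMap (c • f) = c • tyMap f := by
  funext p
  simp only [tyMap, Pi.smul_apply, smul_eq_mul]
  split <;> simp

/-- `tyMap` as a linear map. -/
def tyMapLin (k G : Type*) [Field k] [Group G] [DecidableEq G] : TY k G →ₗ[k] DD k G where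
  toFun := tyMap
  map_add' := tyMap_add
  map_smul' := tyMap_smul

theorem tyMap_indicator {k G : Type*} [Field k] [Group G] [DecidableEq G]
    (g x : G) (h : x * g = g * x) :
    tyMap (fun q => if q = (⟨g, ⟨x, h⟩⟩ : CentPairs G) then (1 : k) else 0)
      = ddBasis g x := by
  funext p
  simp only [tyMap, ddBasis]
  by_cases hc : p.2 * p.1 = p.1 * p.2
  · rw [dif_pos hc]
    by_cases hp : p = (g, x)
    · rw [if_pos hp, if_pos]
      exact centPair_eq (by rw [hp]) (by rw [hp]) hc h
    · rw [if_neg hp, if_neg]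
      intro he
      apply hp
      have h1 : p.1 = g := congrArg Sigma.fst he
      have h2 : p.2 = x := by
        have := (Sigma.mk.inj_iff.mp he).2
        subst h1
        exact congrArg Subtype.val (eq_of_heq this)
      exact Prod.ext h1 h2
  · rw [dif_neg hc, if_neg]
    intro he
    exact hc (he ▸ h)

theorem tyMap_eq_sum {k G : Type*} [Field k] [Group G] [Fintype G] [DecidableEq G]
    (f : TY k G) :
    tyMap f = ∑ q : CentPairs G, f q • ddBasis q.1 (q.2 : G) := by
  funext p
  simp only [tyMap, Finset.sum_apply, Pi.smul_apply, ddBasis, smul_eq_mul]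
  by_cases hc : p.2 * p.1 = p.1 * p.2
  · rw [dif_pos hc]
    rw [Finset.sum_eq_single (⟨p.1, ⟨p.2, hc⟩⟩ : CentPairs G)]
    · simp
    · intro q _ hq
      rw [if_neg, mul_zero]
      intro he
      apply hq
      obtain ⟨qg, qx, hqx⟩ := q
      have h1 : p.1 = qg := congrArg Prod.fst he
      have h2 : p.2 = qx := congrArg Prod.snd he
      exact (centPair_eq h1 h2 hc hqx).symm
    · intro h; exact absurd (Finset.mem_univ _) h
  · rw [dif_neg hc]
    symm
    apply Finset.sum_eq_zero
    intro q _
    rw [if_neg, mul_zero]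
    intro he
    exact hc (by
      have h1 : p.1 = q.1 := congrArg Prod.fst he
      have h2 : p.2 = (q.2 : G) := congrArg Prod.snd he
      rw [h1, h2]; exact q.2.2)

/-- `D^β(k[G])^{comm} ≅ ⊕_{g} k^{θ_g}[Z(g)]` as `k`-algebras, via
`1_x` (in the `g`-th summand) `↦ ⟨g,x⟩`. -/
theorem stmt13 {k G : Type*} [Field k] [Group G] [Fintype G] [DecidableEq G]
    (β : G → G → G → kˣ) (hβ : IsNormalized3Cocycle β) :
    (∀ f f' : TY k G, tyMap (f + f') = tyMap f + tyMap f') ∧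
    (∀ (c : k) (f : TY k G), tyMap (c • f) = c • tyMap f) ∧
    Function.Injective (tyMap (k := k) (G := G)) ∧
    tyMap (tyOne k G) = ddOne k G ∧
    (∀ f f' : TY k G, tyMap (tyMul β f f') = ddMul β (tyMap f) (tyMap f')) ∧
    Set.range (tyMap (k := k) (G := G)) = (ddCommSpan k G : Set (DD k G)) ∧
    (∀ (g x : G) (h : x * g = g * x),
      tyMap (fun q => if q = (⟨g, ⟨x, h⟩⟩ : CentPairs G) then (1 : k) else 0)
        = ddBasis g x) ∧
    (∀ g x y : G, x * g = g * x → y * g = g * y →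
      ddMul β (ddBasis g x) (ddBasis g y) = (ddTheta β g x y : k) • ddBasis g (x * y)) ∧
    (∀ g h x y : G, g ≠ h → x * g = g * x → y * h = h * y →
      ddMul β (ddBasis g x) (ddBasis h y) = 0) := by
  refine ⟨tyMap_add, tyMap_smul, ?_, ?_, ?_, ?_, tyMap_indicator, ?_, ?_⟩
  · -- injectivity
    intro f f' hff
    funext q
    obtain ⟨g, x, hx⟩ := q
    have := congrFun hff (g, x)
    simpa only [tyMap, dif_pos hx] using this
  · -- one
    funext p
    obtain ⟨a, b⟩ := p
    simp only [tyMap, tyOne, ddOne, Finset.sum_apply, ddBasis, Prod.mk.injEq]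
    by_cases hb : b = 1
    · subst hb
      rw [dif_pos (by rw [one_mul, mul_one])]
      simp
    · have h0 : ∀ g : G, ¬(a = g ∧ b = 1) := fun g hh => hb hh.2
      rw [Finset.sum_eq_zero (fun g _ => if_neg (h0 g))]
      by_cases hc : b * a = a * b
      · rw [dif_pos hc, if_neg hb]
      · rw [dif_neg hc]
  · -- multiplicativity
    intro f f'
    funext p
    simp only [tyMap, tyMul, ddMul]
    by_cases hc : p.2 * p.1 = p.1 * p.2
    · rw [dif_pos hc]
      rw [sum_comm_subtype p.1 _ (fun x hx => by
        rw [dif_neg hx, zero_mul, zero_mul])]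
      refine Finset.sum_congr rfl fun x _ => ?_
      rw [dif_pos x.2]
      have e : (x : G)⁻¹ * p.1 * (x : G) = p.1 := conj_eq_self x.2
      rw [e, dif_pos (comm_inv_mul x.2 hc)]
    · rw [dif_neg hc]
      symm
      apply Finset.sum_eq_zero
      intro x _
      by_cases hx : x * p.1 = p.1 * x
      · rw [conj_eq_self hx]
        have h2 : ¬((x⁻¹ * p.2) * p.1 = p.1 * (x⁻¹ * p.2)) := by
          intro h2
          apply hc
          have h3 := comm_mul_left hx h2
          rwa [← mul_assoc, mul_inv_cancel, one_mul] at h3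
        rw [dif_neg h2, mul_zero, zero_mul]
      · rw [dif_neg hx, zero_mul, zero_mul]
  · -- range = span
    apply Set.Subset.antisymm
    · rintro v ⟨f, rfl⟩
      rw [tyMap_eq_sum]
      apply Submodule.sum_mem
      intro q _
      apply Submodule.smul_mem
      apply Submodule.subset_span
      exact ⟨q.1, (q.2 : G), (q.2.2).symm ▸ q.2.2, rfl⟩
    · have hle : ddCommSpan k G ≤ LinearMap.range (tyMapLin k G) := by
        apply Submodule.span_le.mpr
        rintro v ⟨g, x, h, rfl⟩
        exact ⟨fun q => if q = (⟨g, ⟨x, h.symm ▸ h⟩⟩ : CentPairs G) then (1 : k) else 0,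
          tyMap_indicator g x _⟩
      intro v hv
      obtain ⟨f, hf⟩ := hle hv
      exact ⟨f, hf⟩
  · -- diagonal product
    intro g x y hx hy
    funext p
    obtain ⟨a, b⟩ := p
    simp only [ddMul, ddBasis, Pi.smul_apply, smul_eq_mul, Prod.mk.injEq]
    rw [Finset.sum_eq_single x]
    · by_cases ha : a = g
      · subst ha
        rw [conj_eq_self hx]
        by_cases hb : b = x * y
        · subst hb
          have hb' : x⁻¹ * (x * y) = y := by rw [← mul_assoc, inv_mul_cancel, one_mul]
          rw [hb']
          simp [mul_comm]
        · have h1 : x⁻¹ * b ≠ y := fun h => hb (by rw [← h, ← mul_assoc, mul_inv_cancel, one_mul])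
          simp [hb, h1]
      · simp [ha]
    · intro z _ hz
      simp [hz]
    · intro h; exact absurd (Finset.mem_univ _) h
  · -- distinct summands
    intro g h x y hgh hx hy
    funext p
    obtain ⟨a, b⟩ := p
    simp only [ddMul, ddBasis, Pi.zero_apply, Prod.mk.injEq]
    apply Finset.sum_eq_zero
    intro z _
    by_cases h1 : a = g ∧ z = x
    · obtain ⟨rfl, rfl⟩ := h1
      simp [conj_eq_self hx, hgh]
    · simp [h1]

end StringyOrbifold
end
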